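/- Assume the coordinate quasi-Codazzi setup on U and that Φ⁺ x and Φ⁻ x are invertible for every x ∈ U, and define ∇̃⁺_X Y (x) := (Φ⁺ x)⁻¹ ((∇⁺_X(Φ⁺Y))(x)). Then for all smooth vector fields X, Y, Z : U → ℝⁿ and all x ∈ U: C(X,Y,Z)(x) = fderiv ℝ (fun y ↦ h y (Y y) (Z y)) x (X x) − h x ((∇̃⁺_X Y)(x)) (Z x) − h x ((∇̃⁺_X Z)(x)) (Y x). That is, when h is nondegenerate the generalized cubic tensor C equals the classical Amari–Chentsov tensor ∇̃⁺h. (Paper's Lemma 3.13, in a trivialization.) -/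

import Mathlib

noncomputable section

open Set

/-- ℝⁿ. -/
abbrev Vn (n : ℕ) : Type := Fin n → ℝ

/-- Pairings (fiber metrics pairing `E⁺` with `E⁻`) on the trivialized bundle. -/
abbrev Pairn (n : ℕ) : Type := Vn n →L[ℝ] Vn n →L[ℝ] ℝ

/-- Connection forms on the trivialized bundle. -/
abbrev Connn (n : ℕ) : Type := Vn n →L[ℝ] Vn n →L[ℝ] Vn n

/-- Bundle maps `TU → E±` in the trivialization. -/
abbrev Bdln (n : ℕ) : Type := Vn n →L[ℝ] Vn n

/-- Covariant derivative of the section `ν` along the vector field `X`,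
for the connection with connection form `A`. -/
def cov {n : ℕ} (A : Vn n → Connn n) (X ν : Vn n → Vn n) (x : Vn n) : Vn n :=
  fderiv ℝ ν x (X x) + A x (X x) (ν x)

/-- Lie bracket of vector fields on an open set of ℝⁿ. -/
def lieB {n : ℕ} (X Y : Vn n → Vn n) (x : Vn n) : Vn n :=
  fderiv ℝ Y x (X x) - fderiv ℝ X x (Y x)

/-- The section `Φ±Y : x ↦ Φ± x (Y x)`. -/
def secPhi {n : ℕ} (Φ : Vn n → Bdln n) (Y : Vn n → Vn n) : Vn n → Vn n :=
  fun x => Φ x (Y x)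

/-- The induced (possibly degenerate) metric `h x y z = 2 p x (Φ⁺ x y) (Φ⁻ x z)`. -/
def hmet {n : ℕ} (p : Vn n → Pairn n) (Φp Φm : Vn n → Bdln n) (x y z : Vn n) : ℝ :=
  2 * p x (Φp x y) (Φm x z)

/-- The generalized Amari–Chentsov cubic tensor. -/
def Ctensor {n : ℕ} (p : Vn n → Pairn n) (Ap Am : Vn n → Connn n)
    (Φp Φm : Vn n → Bdln n) (X Y Z : Vn n → Vn n) (x : Vn n) : ℝ :=
  -2 * (p x (cov Ap X (secPhi Φp Y) x) (Φm x (Z x))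
        - p x (Φp x (Z x)) (cov Am X (secPhi Φm Y) x))

/-- The relative torsion `T(X,Y) = ∇_X(ΦY) − ∇_Y(ΦX) − Φ[X,Y]`. -/
def Ttor {n : ℕ} (A : Vn n → Connn n) (Φ : Vn n → Bdln n)
    (X Y : Vn n → Vn n) (x : Vn n) : Vn n :=
  cov A X (secPhi Φ Y) x - cov A Y (secPhi Φ X) x - Φ x (lieB X Y x)

/-- The Kossowski pseudo-connection. -/
def Koss {n : ℕ} (p : Vn n → Pairn n) (Φp Φm : Vn n → Bdln n)
    (X Y Z : Vn n → Vn n) (x : Vn n) : ℝ :=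
  fderiv ℝ (fun y => p y (Φp y (Y y)) (Φm y (Z y))) x (X x)
  + fderiv ℝ (fun y => p y (Φp y (Z y)) (Φm y (X y))) x (Y x)
  - fderiv ℝ (fun y => p y (Φp y (X y)) (Φm y (Y y))) x (Z x)
  - p x (Φp x (X x)) (Φm x (lieB Y Z x))
  + p x (Φp x (Y x)) (Φm x (lieB Z X x))
  + p x (Φp x (Z x)) (Φm x (lieB X Y x))

/-- The curvature of a connection form `A` at `x` in directions `v`, `w`. -/
def curvA {n : ℕ} (A : Vn n → Connn n) (x v w : Vn n) : Vn n →L[ℝ] Vn n :=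
  fderiv ℝ A x v w - fderiv ℝ A x w v + (A x v).comp (A x w) - (A x w).comp (A x v)

lemma fderiv_pair_apply {n : ℕ} (p : Vn n → Pairn n) (f g : Vn n → Vn n) (x v : Vn n)
    (hp : DifferentiableAt ℝ p x) (hf : DifferentiableAt ℝ f x)
    (hg : DifferentiableAt ℝ g x) :
    fderiv ℝ (fun y => p y (f y) (g y)) x v
      = fderiv ℝ p x v (f x) (g x) + p x (fderiv ℝ f x v) (g x)
        + p x (f x) (fderiv ℝ g x v) := by
  have h1 : DifferentiableAt ℝ (fun y => p y (f y)) x := hp.clm_apply hf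
  rw [fderiv_clm_apply h1 hg, fderiv_clm_apply hp hf]
  simp only [ContinuousLinearMap.add_apply, ContinuousLinearMap.comp_apply,
    ContinuousLinearMap.flip_apply]
  ring

/-- Paper's Lemma 3.13 (in a trivialization): in the coordinate quasi-Codazzi setup,
if `Φ⁺ x` and `Φ⁻ x` are invertible for every `x ∈ U` (with pointwise inverses `Ψ⁺`,
`Ψ⁻`), then the generalized cubic tensor `C` coincides with the classical
Amari–Chentsov tensor `∇̃⁺h`, where `∇̃⁺_X Y = (Φ⁺)⁻¹ ∇⁺_X(Φ⁺Y)`. -/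
theorem statement9 {n : ℕ} (U : Set (Vn n)) (hUopen : IsOpen U)
    (p : Vn n → Pairn n) (hpsmooth : ContDiffOn ℝ (⊤ : ℕ∞) p U)
    (Ap Am : Vn n → Connn n)
    (hApsmooth : ContDiffOn ℝ (⊤ : ℕ∞) Ap U) (hAmsmooth : ContDiffOn ℝ (⊤ : ℕ∞) Am U)
    (hdual : ∀ x ∈ U, ∀ v a b : Vn n,
      fderiv ℝ p x v a b = p x (Ap x v a) b + p x a (Am x v b))
    (Φp Φm : Vn n → Bdln n)
    (hΦpsmooth : ContDiffOn ℝ (⊤ : ℕ∞) Φp U) (hΦmsmooth : ContDiffOn ℝ (⊤ : ℕ∞) Φm U)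
    (hLag : ∀ x ∈ U, ∀ y z : Vn n, p x (Φp x y) (Φm x z) = p x (Φp x z) (Φm x y))
    -- pointwise inverses of Φ⁺ and Φ⁻ (so Φ⁺ x and Φ⁻ x are invertible on U)
    (Ψp Ψm : Vn n → Bdln n)
    (hΨp : ∀ x ∈ U, (∀ v : Vn n, Ψp x (Φp x v) = v) ∧ (∀ v : Vn n, Φp x (Ψp x v) = v))
    (hΨm : ∀ x ∈ U, (∀ v : Vn n, Ψm x (Φm x v) = v) ∧ (∀ v : Vn n, Φm x (Ψm x v) = v)) :
    ∀ X Y Z : Vn n → Vn n,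
      ContDiffOn ℝ (⊤ : ℕ∞) X U → ContDiffOn ℝ (⊤ : ℕ∞) Y U → ContDiffOn ℝ (⊤ : ℕ∞) Z U →
      ∀ x ∈ U,
        Ctensor p Ap Am Φp Φm X Y Z x
          = fderiv ℝ (fun y => hmet p Φp Φm y (Y y) (Z y)) x (X x)
            - hmet p Φp Φm x (Ψp x (cov Ap X (secPhi Φp Y) x)) (Z x)
            - hmet p Φp Φm x (Ψp x (cov Ap X (secPhi Φp Z) x)) (Y x) := by
  intro X Y Z hX hY hZ x hx
  have hmem : U ∈ nhds x := hUopen.mem_nhds hx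
  have dp : DifferentiableAt ℝ p x := (hpsmooth.contDiffAt hmem).differentiableAt (by simp)
  have dΦp : DifferentiableAt ℝ Φp x := (hΦpsmooth.contDiffAt hmem).differentiableAt (by simp)
  have dΦm : DifferentiableAt ℝ Φm x := (hΦmsmooth.contDiffAt hmem).differentiableAt (by simp)
  have dY : DifferentiableAt ℝ Y x := (hY.contDiffAt hmem).differentiableAt (by simp)
  have dZ : DifferentiableAt ℝ Z x := (hZ.contDiffAt hmem).differentiableAt (by simp)
  have dfY : DifferentiableAt ℝ (secPhi Φp Y) x := dΦp.clm_apply dY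
  have dfZ : DifferentiableAt ℝ (secPhi Φp Z) x := dΦp.clm_apply dZ
  have dgY : DifferentiableAt ℝ (secPhi Φm Y) x := dΦm.clm_apply dY
  have dgZ : DifferentiableAt ℝ (secPhi Φm Z) x := dΦm.clm_apply dZ
  set v := X x with hv
  -- expansion of the derivative of the pairing of two sections
  have key : ∀ f g : Vn n → Vn n, DifferentiableAt ℝ f x → DifferentiableAt ℝ g x →
      fderiv ℝ (fun y => p y (f y) (g y)) x v
        = p x (fderiv ℝ f x v + Ap x v (f x)) (g x)
          + p x (f x) (fderiv ℝ g x v + Am x v (g x)) := by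
    intro f g hf hg
    rw [fderiv_pair_apply p f g x v dp hf hg, hdual x hx v (f x) (g x)]
    simp only [map_add, ContinuousLinearMap.add_apply]
    ring
  have e1 := key (secPhi Φp Y) (secPhi Φm Z) dfY dgZ
  have e2 := key (secPhi Φp Z) (secPhi Φm Y) dfZ dgY
  -- the two pairings agree on U, hence have the same derivative
  have heq : (fun y => p y (secPhi Φp Y y) (secPhi Φm Z y))
      =ᶠ[nhds x] (fun y => p y (secPhi Φp Z y) (secPhi Φm Y y)) := by
    filter_upwards [hmem] with y hy
    exact hLag y hy (Y y) (Z y)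
  have hfd : fderiv ℝ (fun y => p y (secPhi Φp Y y) (secPhi Φm Z y)) x
      = fderiv ℝ (fun y => p y (secPhi Φp Z y) (secPhi Φm Y y)) x := heq.fderiv_eq
  have hD : p x (fderiv ℝ (secPhi Φp Y) x v + Ap x v (secPhi Φp Y x)) (secPhi Φm Z x)
        + p x (secPhi Φp Y x) (fderiv ℝ (secPhi Φm Z) x v + Am x v (secPhi Φm Z x))
      = p x (fderiv ℝ (secPhi Φp Z) x v + Ap x v (secPhi Φp Z x)) (secPhi Φm Y x)
        + p x (secPhi Φp Z x) (fderiv ℝ (secPhi Φm Y) x v + Am x v (secPhi Φm Y x)) := by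
    rw [← e1, ← e2, hfd]
  -- compute the derivative of h(Y,Z)
  have dq : DifferentiableAt ℝ (fun y => p y (secPhi Φp Y y) (secPhi Φm Z y)) x :=
    (dp.clm_apply dfY).clm_apply dgZ
  have hh : fderiv ℝ (fun y => hmet p Φp Φm y (Y y) (Z y)) x v
      = 2 * fderiv ℝ (fun y => p y (secPhi Φp Y y) (secPhi Φm Z y)) x v := by
    have : (fun y => hmet p Φp Φm y (Y y) (Z y))
        = fun y => 2 * (fun y => p y (secPhi Φp Y y) (secPhi Φm Z y)) y := by
      funext y; rfl
    rw [this, fderiv_const_mul dq]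
    simp
  rw [hh, e1]
  simp only [Ctensor, hmet, cov, secPhi, (hΨp x hx).2] at *
  nlinarith [hD]
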